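/- Let G be a symmetric d×d real matrix with ‖G‖₂ ≤ √L and let H be a symmetric d×d real matrix with ‖H‖₂ ≤ L. Then for every δ with 0 < δ ≤ 1/(2^8 · d² · L), the matrix I − δH + √(2δ)·G is invertible and |det(I − δH + √(2δ)·G)^{-1} − (1 − √(2δ)·tr(G) + δ·tr(H) + δ·(tr G)² + δ·tr(G²))| ≤ 90·δ^{3/2}·d³·L^{3/2}. -/

import Mathlib

/-- The operator norm of a `d × d` real matrix with respect to the Euclidean
norm on `ℝ^d`. -/
noncomputable def matOpNorm {d : ℕ} (A : Matrix (Fin d) (Fin d) ℝ) : ℝ :=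
  ‖Matrix.toEuclideanCLM (𝕜 := ℝ) A‖

open scoped Matrix.Norms.L2Operator

lemma matOpNorm_def {d : ℕ} (A : Matrix (Fin d) (Fin d) ℝ) : matOpNorm A = ‖A‖ := rfl

lemma eig_abs_le {d : ℕ} {A : Matrix (Fin d) (Fin d) ℝ} (hA : A.IsHermitian) (i : Fin d) :
    |hA.eigenvalues i| ≤ ‖A‖ := by
  set v : EuclideanSpace ℝ (Fin d) := hA.eigenvectorBasis i with hv
  have hnv : ‖v‖ = 1 := hA.eigenvectorBasis.orthonormal.1 i
  have happ : (Matrix.toEuclideanCLM (𝕜 := ℝ) A) v = hA.eigenvalues i • v := by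
    apply (WithLp.equiv 2 ((Fin d) → ℝ)).injective
    simp only [WithLp.equiv_apply, Matrix.ofLp_toEuclideanCLM, WithLp.ofLp_smul]
    exact hA.mulVec_eigenvectorBasis i
  have h1 : ‖(Matrix.toEuclideanCLM (𝕜 := ℝ) A) v‖ ≤ ‖A‖ * ‖v‖ :=
    ContinuousLinearMap.le_opNorm _ _
  rw [happ, norm_smul, Real.norm_eq_abs, hnv, mul_one, mul_one] at h1
  exact h1

open Matrix in
lemma herm_decomp {d : ℕ} {A : Matrix (Fin d) (Fin d) ℝ} (hA : A.IsHermitian) :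
    ∃ V D : Matrix (Fin d) (Fin d) ℝ, V * star V = 1 ∧ star V * V = 1 ∧
      D = Matrix.diagonal hA.eigenvalues ∧ A = V * D * star V := by
  refine ⟨hA.eigenvectorUnitary, Matrix.diagonal hA.eigenvalues,
    (Matrix.mem_unitaryGroup_iff).mp hA.eigenvectorUnitary.2,
    (Matrix.mem_unitaryGroup_iff').mp hA.eigenvectorUnitary.2, rfl, ?_⟩
  have := hA.spectral_theorem
  simpa [RCLike.ofReal_real_eq_id] using this

lemma herm_trace {d : ℕ} {A : Matrix (Fin d) (Fin d) ℝ} (hA : A.IsHermitian) :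
    A.trace = ∑ i, hA.eigenvalues i := by
  obtain ⟨V, D, hV1, hV2, hD, hVA⟩ := herm_decomp hA
  have hTA := congrArg Matrix.trace hVA
  rw [hTA, Matrix.trace_mul_cycle, hV2, Matrix.one_mul, hD,
    Matrix.trace_diagonal]

lemma herm_trace_sq {d : ℕ} {A : Matrix (Fin d) (Fin d) ℝ} (hA : A.IsHermitian) :
    (A * A).trace = ∑ i, hA.eigenvalues i ^ 2 := by
  obtain ⟨V, D, hV1, hV2, hD, hVA⟩ := herm_decomp hA
  have : A * A = V * (D * D) * star V := by
    rw [hVA]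
    calc V * D * star V * (V * D * star V) = V * D * (star V * V) * D * star V := by
          noncomm_ring
      _ = V * (D * D) * star V := by rw [hV2]; noncomm_ring
  have hTA := congrArg Matrix.trace this
  rw [hTA, Matrix.trace_mul_cycle, hV2, Matrix.one_mul, hD,
    Matrix.diagonal_mul_diagonal, Matrix.trace_diagonal]
  exact Finset.sum_congr rfl fun i _ => (sq _).symm

lemma herm_det_one_add {d : ℕ} {A : Matrix (Fin d) (Fin d) ℝ} (hA : A.IsHermitian) :
    (1 + A).det = ∏ i, (1 + hA.eigenvalues i) := by
  obtain ⟨V, D, hV1, hV2, hD, hVA⟩ := herm_decomp hA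
  have h1 : (1 : Matrix (Fin d) (Fin d) ℝ) + A = V * (1 + D) * star V := by
    rw [hVA, Matrix.mul_add, Matrix.add_mul, Matrix.mul_one, hV1]
  rw [h1, Matrix.det_mul, Matrix.det_mul]
  have hdet : V.det * (star V).det = 1 := by
    rw [← Matrix.det_mul, hV1, Matrix.det_one]
  have : V.det * (1 + D).det * (star V).det = (1 + D).det * (V.det * (star V).det) := by ring
  rw [this, hdet, mul_one, hD, ← Matrix.diagonal_one, Matrix.diagonal_add,
    Matrix.det_diagonal]

lemma prod_approx {ι : Type*} [DecidableEq ι] (ε : ℝ) (hε : 0 ≤ ε) (s : Finset ι) (x : ι → ℝ)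
    (hx : ∀ i ∈ s, |x i| ≤ ε) (hcard : (s.card : ℝ) * ε ≤ 1 / 2) :
    |(∏ i ∈ s, (1 + x i)) -
        (1 + (∑ i ∈ s, x i) + ((∑ i ∈ s, x i) ^ 2 - ∑ i ∈ s, x i ^ 2) / 2)| ≤
      (s.card : ℝ) ^ 3 * ε ^ 3 := by
  induction s using Finset.induction_on with
  | empty => simp
  | @insert a s ha ih =>
    have hxa : |x a| ≤ ε := hx a (Finset.mem_insert_self a s)
    have hcards : ((s.card : ℝ)) * ε ≤ 1 / 2 := by
      have h1 : (s.card : ℝ) ≤ ((insert a s).card : ℝ) := by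
        exact_mod_cast Finset.card_le_card (Finset.subset_insert a s)
      nlinarith [mul_le_mul_of_nonneg_right h1 hε]
    have ih' := ih (fun i hi => hx i (Finset.mem_insert_of_mem hi)) hcards
    set n : ℝ := (s.card : ℝ) with hn
    have hn0 : 0 ≤ n := Nat.cast_nonneg _
    set S : ℝ := ∑ i ∈ s, x i with hS
    set Q : ℝ := ∑ i ∈ s, x i ^ 2 with hQ
    have hSb : |S| ≤ n * ε := by
      calc |S| ≤ ∑ i ∈ s, |x i| := Finset.abs_sum_le_sum_abs _ _
        _ ≤ ∑ _i ∈ s, ε := Finset.sum_le_sum fun i hi => hx i (Finset.mem_insert_of_mem hi)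
        _ = n * ε := by rw [Finset.sum_const, nsmul_eq_mul]
    have hQb : |Q| ≤ n * ε ^ 2 := by
      calc |Q| ≤ ∑ i ∈ s, |x i ^ 2| := Finset.abs_sum_le_sum_abs _ _
        _ ≤ ∑ _i ∈ s, ε ^ 2 := Finset.sum_le_sum fun i hi => by
            rw [abs_pow]
            exact pow_le_pow_left₀ (abs_nonneg _) (hx i (Finset.mem_insert_of_mem hi)) 2
        _ = n * ε ^ 2 := by rw [Finset.sum_const, nsmul_eq_mul]
    rw [Finset.prod_insert ha, Finset.sum_insert ha, Finset.sum_insert ha,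
      Finset.card_insert_of_notMem ha]
    set P : ℝ := ∏ i ∈ s, (1 + x i) with hP
    set T : ℝ := 1 + S + (S ^ 2 - Q) / 2 with hT
    have key : (1 + x a) * P - (1 + (x a + S) + ((x a + S) ^ 2 - (x a ^ 2 + Q)) / 2) =
        (P - T) * (1 + x a) + x a * (S ^ 2 - Q) / 2 := by ring
    have hcard' : ((s.card + 1 : ℕ) : ℝ) = n + 1 := by push_cast; ring
    rw [key, hcard']
    have h1 : |(P - T) * (1 + x a) + x a * (S ^ 2 - Q) / 2| ≤
        |P - T| * |1 + x a| + |x a| * |S ^ 2 - Q| / 2 := by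
      calc _ ≤ |(P - T) * (1 + x a)| + |x a * (S ^ 2 - Q) / 2| := abs_add_le _ _
        _ = |P - T| * |1 + x a| + |x a| * |S ^ 2 - Q| / 2 := by
            rw [abs_mul, abs_div, abs_mul]
            norm_num
    have h2 : |1 + x a| ≤ 1 + ε := by
      have := abs_add_le (1 : ℝ) (x a)
      simp only [abs_one] at this
      linarith
    have h3 : |S ^ 2 - Q| ≤ n ^ 2 * ε ^ 2 + n * ε ^ 2 := by
      have : |S ^ 2| ≤ n ^ 2 * ε ^ 2 := by
        rw [abs_pow]
        calc |S| ^ 2 ≤ (n * ε) ^ 2 := pow_le_pow_left₀ (abs_nonneg _) hSb 2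
          _ = n ^ 2 * ε ^ 2 := by ring
      calc |S ^ 2 - Q| ≤ |S ^ 2| + |Q| := abs_sub _ _
        _ ≤ n ^ 2 * ε ^ 2 + n * ε ^ 2 := add_le_add this hQb
    have hPT : |P - T| ≤ n ^ 3 * ε ^ 3 := ih'
    have hne : n * ε ≤ 1 / 2 := hcards
    calc |(P - T) * (1 + x a) + x a * (S ^ 2 - Q) / 2|
        ≤ |P - T| * |1 + x a| + |x a| * |S ^ 2 - Q| / 2 := h1
      _ ≤ n ^ 3 * ε ^ 3 * (1 + ε) + ε * (n ^ 2 * ε ^ 2 + n * ε ^ 2) / 2 := by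
          have t1 : |P - T| * |1 + x a| ≤ n ^ 3 * ε ^ 3 * (1 + ε) :=
            mul_le_mul hPT h2 (abs_nonneg _) (by positivity)
          have t2 : |x a| * |S ^ 2 - Q| ≤ ε * (n ^ 2 * ε ^ 2 + n * ε ^ 2) :=
            mul_le_mul hxa h3 (abs_nonneg _) hε
          linarith
      _ ≤ (n + 1) ^ 3 * ε ^ 3 := by
          have h4 : n ^ 2 * (n * ε) ≤ n ^ 2 * (1 / 2) :=
            mul_le_mul_of_nonneg_left hne (pow_nonneg hn0 2)
          nlinarith [pow_nonneg hε 3, h4, mul_nonneg (pow_nonneg hn0 2) (pow_nonneg hε 3),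
            mul_nonneg hn0 (pow_nonneg hε 3)]

open scoped Matrix.Norms.L2Operator in
lemma herm_trace_abs_le {d : ℕ} {A : Matrix (Fin d) (Fin d) ℝ} (hA : A.IsHermitian) :
    |A.trace| ≤ d * ‖A‖ := by
  rw [herm_trace hA]
  calc |∑ i, hA.eigenvalues i| ≤ ∑ i, |hA.eigenvalues i| := Finset.abs_sum_le_sum_abs _ _
    _ ≤ ∑ _i : Fin d, ‖A‖ := Finset.sum_le_sum fun i _ => eig_abs_le hA i
    _ = d * ‖A‖ := by rw [Finset.sum_const, Finset.card_univ, Fintype.card_fin, nsmul_eq_mul]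

lemma sqrt2_le : Real.sqrt 2 ≤ 3 / 2 := by
  nlinarith [Real.sq_sqrt (by norm_num : (0:ℝ) ≤ 2), Real.sqrt_nonneg 2]

lemma sq_le_imp {x c : ℝ} (hx : 0 ≤ x) (hc : 0 ≤ c) (h : x ^ 2 ≤ c ^ 2) : x ≤ c := by
  nlinarith

lemma cube_bound1 {x : ℝ} (hx : 1 ≤ x) : x ≤ x ^ 3 := by nlinarith [sq_nonneg x, sq_nonneg (x-1), mul_nonneg (mul_nonneg (by linarith : (0:ℝ) ≤ x) (by linarith : (0:ℝ) ≤ x - 1)) (by linarith : (0:ℝ) ≤ x + 1)]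

lemma cube_bound2 {x : ℝ} (hx : 1 ≤ x) : x ^ 2 ≤ x ^ 3 := by nlinarith [mul_nonneg (mul_nonneg (by linarith : (0:ℝ) ≤ x) (by linarith : (0:ℝ) ≤ x)) (by linarith : (0:ℝ) ≤ x - 1)]

lemma aux_inv {m : ℝ} (h : 0 < 1 + m) : (1 + m)⁻¹ = 1 + -m / (1 + m) := by
  field_simp; ring

lemma aux_s_nonneg {m s : ℝ} (hm : |m| ≤ 2 * s) : 0 ≤ s := by
  have := abs_nonneg m; linarith

lemma aux_y_abs {m s : ℝ} (hm : |m| ≤ 2 * s) (h1 : 7 / 8 ≤ 1 + m) :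
    |-m / (1 + m)| ≤ 3 * s := by
  have h0 : (0:ℝ) < 1 + m := by linarith
  have hs := aux_s_nonneg hm
  rw [abs_div, abs_neg, abs_of_pos h0, div_le_iff₀ h0]
  nlinarith [abs_le.mp hm, hs]

lemma aux_y_cubic {m s : ℝ} (hm : |m| ≤ 2 * s) (h1 : 7 / 8 ≤ 1 + m) :
    |-m / (1 + m) + m - m ^ 2| ≤ 10 * s ^ 3 := by
  have h0 : (0:ℝ) < 1 + m := by linarith
  have hs := aux_s_nonneg hm
  have hid : -m / (1 + m) + m - m ^ 2 = -(m ^ 3) / (1 + m) := by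
    field_simp; ring
  rw [hid, abs_div, abs_neg, abs_pow, abs_of_pos h0, div_le_iff₀ h0]
  have h3 : |m| ^ 3 ≤ (2 * s) ^ 3 := pow_le_pow_left₀ (abs_nonneg _) hm 3
  nlinarith [pow_nonneg hs 3]

lemma aux_y_plus {m s : ℝ} (hm : |m| ≤ 2 * s) (h1 : 7 / 8 ≤ 1 + m) :
    |-m / (1 + m) + m| ≤ 5 * s ^ 2 := by
  have h0 : (0:ℝ) < 1 + m := by linarith
  have hs := aux_s_nonneg hm
  have hid : -m / (1 + m) + m = m ^ 2 / (1 + m) := by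
    field_simp; ring
  rw [hid, abs_div, abs_pow, abs_of_pos h0, div_le_iff₀ h0]
  have h3 : |m| ^ 2 ≤ (2 * s) ^ 2 := pow_le_pow_left₀ (abs_nonneg _) hm 2
  nlinarith [pow_nonneg hs 2]

lemma aux_y_sq {m s : ℝ} (hm : |m| ≤ 2 * s) (h1 : 7 / 8 ≤ 1 + m) :
    |(-m / (1 + m)) ^ 2 - m ^ 2| ≤ 25 * s ^ 3 := by
  have hs := aux_s_nonneg hm
  have hy := aux_y_abs hm h1
  have hp := aux_y_plus hm h1
  have hid : (-m / (1 + m)) ^ 2 - m ^ 2 = (-m / (1 + m) + m) * (-m / (1 + m) - m) := by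
    ring
  have h2 : |-m / (1 + m) - m| ≤ 5 * s := by
    have := abs_sub (-m / (1 + m)) m
    linarith
  rw [hid, abs_mul]
  calc |-m / (1 + m) + m| * |-m / (1 + m) - m| ≤ 5 * s ^ 2 * (5 * s) :=
        mul_le_mul hp h2 (abs_nonneg _) (by positivity)
    _ = 25 * s ^ 3 := by ring

set_option maxHeartbeats 1600000 in
open scoped Matrix.Norms.L2Operator in
theorem stmt13 {d : ℕ} (hd : 0 < d) (L : ℝ) (hL : 0 < L)
    (G : Matrix (Fin d) (Fin d) ℝ) (hGsymm : G.IsSymm)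
    (hG : matOpNorm G ≤ Real.sqrt L)
    (H : Matrix (Fin d) (Fin d) ℝ) (hHsymm : H.IsSymm) (hH : matOpNorm H ≤ L)
    (δ : ℝ) (hδ0 : 0 < δ) (hδ : δ ≤ 1 / (2 ^ 8 * d ^ 2 * L)) :
    IsUnit (1 - δ • H + Real.sqrt (2 * δ) • G) ∧
      |((1 - δ • H + Real.sqrt (2 * δ) • G).det)⁻¹ -
          (1 - Real.sqrt (2 * δ) * G.trace + δ * H.trace + δ * G.trace ^ 2 +
            δ * (G * G).trace)| ≤
        90 * (δ * Real.sqrt δ) * (d : ℝ) ^ 3 * (L * Real.sqrt L) := by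
  have hGnorm : ‖G‖ ≤ Real.sqrt L := hG
  have hHnorm : ‖H‖ ≤ L := hH
  set a : ℝ := Real.sqrt (2 * δ) with ha
  set t : ℝ := Real.sqrt δ with hts
  set r : ℝ := Real.sqrt L with hr
  set s : ℝ := t * r with hsdef
  have ht0 : 0 ≤ t := Real.sqrt_nonneg _
  have hr0 : 0 ≤ r := Real.sqrt_nonneg _
  have ht2 : t ^ 2 = δ := Real.sq_sqrt hδ0.le
  have hr2 : r ^ 2 = L := Real.sq_sqrt hL.le
  have hs0 : 0 ≤ s := mul_nonneg ht0 hr0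
  have ha0 : 0 ≤ a := Real.sqrt_nonneg _
  have hat : a ≤ 3 / 2 * t := by
    rw [ha, Real.sqrt_mul (by norm_num : (0:ℝ) ≤ 2), hts]
    exact mul_le_mul_of_nonneg_right sqrt2_le (Real.sqrt_nonneg δ)
  have hD1 : (1 : ℝ) ≤ (d : ℝ) := by exact_mod_cast hd
  have hdnn : (0:ℝ) ≤ (d:ℝ) := Nat.cast_nonneg d
  have hsq : s ^ 2 = δ * L := by rw [hsdef, mul_pow, ht2, hr2]
  have hs3 : s ^ 3 = t ^ 3 * r ^ 3 := by rw [hsdef]; ring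
  have hds : (d : ℝ) * s ≤ 1 / 16 := by
    have h1 : δ * ((2 : ℝ) ^ 8 * d ^ 2 * L) ≤ 1 := by
      rw [le_div_iff₀ (by positivity)] at hδ; linarith
    have hsq2 : (d : ℝ) ^ 2 * s ^ 2 = (d : ℝ) ^ 2 * (δ * L) := by rw [hsq]
    have h2 : ((d : ℝ) * s) ^ 2 ≤ (1 / 16 : ℝ) ^ 2 := by
      have e1 : ((d : ℝ) * s) ^ 2 = (d : ℝ) ^ 2 * s ^ 2 := by ring
      rw [e1, hsq2]
      linarith [h1]
    exact sq_le_imp (mul_nonneg hdnn hs0) (by norm_num) h2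
  have hs16 : s ≤ 1 / 16 := by
    have h1 : 1 * s ≤ (d : ℝ) * s := mul_le_mul_of_nonneg_right hD1 hs0
    linarith
  -- the perturbation matrix
  set E : Matrix (Fin d) (Fin d) ℝ := a • G - δ • H with hEdef
  have hM : (1 : Matrix (Fin d) (Fin d) ℝ) - δ • H + a • G = 1 + E := by
    rw [hEdef]; abel
  have hE : E.IsHermitian := by
    rw [Matrix.IsHermitian, Matrix.conjTranspose_eq_transpose_of_trivial]
    rw [hEdef, Matrix.transpose_sub, Matrix.transpose_smul, Matrix.transpose_smul,
      hGsymm.eq, hHsymm.eq]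
  have hEnorm : ‖E‖ ≤ 2 * s := by
    have h1 : ‖E‖ ≤ ‖a • G‖ + ‖δ • H‖ := norm_sub_le _ _
    rw [norm_smul, norm_smul, Real.norm_eq_abs, Real.norm_eq_abs, abs_of_nonneg ha0,
      abs_of_nonneg hδ0.le] at h1
    have h2 : a * ‖G‖ ≤ 3 / 2 * t * r :=
      mul_le_mul hat hGnorm (norm_nonneg _) (by linarith)
    have h3 : δ * ‖H‖ ≤ t ^ 2 * r ^ 2 := by
      rw [ht2, hr2]; exact mul_le_mul_of_nonneg_left hHnorm hδ0.le
    have h4 : t ^ 2 * r ^ 2 = s * s := by rw [hsdef]; ring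
    have h5 : s * s ≤ s / 2 := by
      have := mul_le_mul_of_nonneg_right hs16 hs0
      linarith
    have h6 : 3 / 2 * t * r = 3 / 2 * s := by rw [hsdef]; ring
    linarith
  set μ : Fin d → ℝ := hE.eigenvalues with hμdef
  have hμ : ∀ i, |μ i| ≤ 2 * s := fun i => (eig_abs_le hE i).trans hEnorm
  have h1μ : ∀ i, 7 / 8 ≤ 1 + μ i := fun i => by
    have h1 := (abs_le.mp (hμ i)).1
    have h2 : 2 * s ≤ 1 / 8 := by
      have := mul_le_mul_of_nonneg_right hD1 hs0
      linarith
    linarith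
  have h1μpos : ∀ i, (0 : ℝ) < 1 + μ i := fun i => lt_of_lt_of_le (by norm_num) (h1μ i)
  have hdet : (1 + E).det = ∏ i, (1 + μ i) := herm_det_one_add hE
  have hdetpos : 0 < (1 + E).det := by
    rw [hdet]; exact Finset.prod_pos fun i _ => h1μpos i
  have hunit : IsUnit (1 - δ • H + a • G) := by
    rw [hM, Matrix.isUnit_iff_isUnit_det, isUnit_iff_ne_zero]
    exact ne_of_gt hdetpos
  refine ⟨hunit, ?_⟩
  -- trace identities
  have haa : a * a = 2 * δ := by rw [← sq, ha]; exact Real.sq_sqrt (by linarith)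
  have hS1E : E.trace = a * G.trace - δ * H.trace := by
    rw [hEdef, Matrix.trace_sub, Matrix.trace_smul, Matrix.trace_smul, smul_eq_mul, smul_eq_mul]
  have hEE : E * E = (a * a) • (G * G) - (a * δ) • (G * H) - (δ * a) • (H * G) +
      (δ * δ) • (H * H) := by
    rw [hEdef]
    simp only [Matrix.sub_mul, Matrix.mul_sub, smul_mul_assoc, mul_smul_comm, smul_smul]
    module
  have hS2E : (E * E).trace = (a * a) * (G * G).trace -
      (a * δ) * ((G * H).trace + (H * G).trace) + (δ * δ) * (H * H).trace := by
    rw [hEE]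
    simp only [Matrix.trace_add, Matrix.trace_sub, Matrix.trace_smul, smul_eq_mul]
    ring
  -- hermitian-ness of the blocks
  have hG' : G.IsHermitian := by
    rw [Matrix.IsHermitian, Matrix.conjTranspose_eq_transpose_of_trivial]; exact hGsymm
  have hH' : H.IsHermitian := by
    rw [Matrix.IsHermitian, Matrix.conjTranspose_eq_transpose_of_trivial]; exact hHsymm
  have hGG' : (G * G).IsHermitian := by
    rw [Matrix.IsHermitian, Matrix.conjTranspose_mul, hG'.eq]
  have hHH' : (H * H).IsHermitian := by
    rw [Matrix.IsHermitian, Matrix.conjTranspose_mul, hH'.eq]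
  have hGH' : (G * H + H * G).IsHermitian := by
    rw [Matrix.IsHermitian, Matrix.conjTranspose_add, Matrix.conjTranspose_mul,
      Matrix.conjTranspose_mul, hG'.eq, hH'.eq]
    abel
  -- trace bounds
  have htrG : |G.trace| ≤ (d : ℝ) * r :=
    (herm_trace_abs_le hG').trans (mul_le_mul_of_nonneg_left hGnorm hdnn)
  have htrH : |H.trace| ≤ (d : ℝ) * r ^ 2 := by
    refine (herm_trace_abs_le hH').trans (mul_le_mul_of_nonneg_left ?_ hdnn)
    rw [hr2]; exact hHnorm
  have htrGG : |(G * G).trace| ≤ (d : ℝ) * r ^ 2 := by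
    refine (herm_trace_abs_le hGG').trans (mul_le_mul_of_nonneg_left ?_ hdnn)
    calc ‖G * G‖ ≤ ‖G‖ * ‖G‖ := norm_mul_le _ _
      _ ≤ r * r := mul_le_mul hGnorm hGnorm (norm_nonneg _) hr0
      _ = r ^ 2 := (sq r).symm
  have htrHH : |(H * H).trace| ≤ (d : ℝ) * r ^ 4 := by
    refine (herm_trace_abs_le hHH').trans (mul_le_mul_of_nonneg_left ?_ hdnn)
    calc ‖H * H‖ ≤ ‖H‖ * ‖H‖ := norm_mul_le _ _
      _ ≤ L * L := mul_le_mul hHnorm hHnorm (norm_nonneg _) hL.le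
      _ = r ^ 4 := by rw [← hr2]; ring
  have htrGH : |(G * H).trace + (H * G).trace| ≤ 2 * (d : ℝ) * r ^ 3 := by
    have h0 : (G * H).trace + (H * G).trace = (G * H + H * G).trace :=
      (Matrix.trace_add _ _).symm
    rw [h0]
    refine (herm_trace_abs_le hGH').trans ?_
    have h1 : ‖G * H + H * G‖ ≤ 2 * (r * L) := by
      calc ‖G * H + H * G‖ ≤ ‖G * H‖ + ‖H * G‖ := norm_add_le _ _
        _ ≤ ‖G‖ * ‖H‖ + ‖H‖ * ‖G‖ := add_le_add (norm_mul_le _ _) (norm_mul_le _ _)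
        _ ≤ r * L + L * r := add_le_add
            (mul_le_mul hGnorm hHnorm (norm_nonneg _) hr0)
            (mul_le_mul hHnorm hGnorm (norm_nonneg _) hL.le)
        _ = 2 * (r * L) := by ring
    calc (d : ℝ) * ‖G * H + H * G‖ ≤ (d : ℝ) * (2 * (r * L)) :=
          mul_le_mul_of_nonneg_left h1 hdnn
      _ = 2 * (d : ℝ) * r ^ 3 := by rw [← hr2]; ring
  -- the inverse-factor sequence
  set y : Fin d → ℝ := fun i => -μ i / (1 + μ i) with hydef
  have hyb : ∀ i, |y i| ≤ 3 * s := fun i => by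
    simp only [hydef]; exact aux_y_abs (hμ i) (h1μ i)
  have hycubic : ∀ i, |y i + μ i - μ i ^ 2| ≤ 10 * s ^ 3 := fun i => by
    simp only [hydef]; exact aux_y_cubic (hμ i) (h1μ i)
  have hyplus : ∀ i, |y i + μ i| ≤ 5 * s ^ 2 := fun i => by
    simp only [hydef]; exact aux_y_plus (hμ i) (h1μ i)
  have hysq : ∀ i, |y i ^ 2 - μ i ^ 2| ≤ 25 * s ^ 3 := fun i => by
    simp only [hydef]; exact aux_y_sq (hμ i) (h1μ i)
  have hy1 : ∀ i, (1 + μ i)⁻¹ = 1 + y i := fun i => by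
    simp only [hydef]; exact aux_inv (h1μpos i)
  -- the determinant inverse as a product
  have hdetinv : ((1 + E).det)⁻¹ = ∏ i, (1 + y i) := by
    rw [hdet, ← Finset.prod_inv_distrib]
    exact Finset.prod_congr rfl fun i _ => hy1 i
  have hcard : ((Finset.univ : Finset (Fin d)).card : ℝ) * (3 * s) ≤ 1 / 2 := by
    rw [Finset.card_univ, Fintype.card_fin]
    linarith [hds]
  have happrox := prod_approx (3 * s) (by positivity) Finset.univ y (fun i _ => hyb i) hcard
  rw [Finset.card_univ, Fintype.card_fin] at happrox
  -- summing tool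
  have sumb : ∀ (f : Fin d → ℝ) (c : ℝ), (∀ i, |f i| ≤ c) → |∑ i, f i| ≤ (d : ℝ) * c := by
    intro f c hf
    calc |∑ i, f i| ≤ ∑ i, |f i| := Finset.abs_sum_le_sum_abs _ _
      _ ≤ ∑ _i : Fin d, c := Finset.sum_le_sum fun i _ => hf i
      _ = (d : ℝ) * c := by rw [Finset.sum_const, Finset.card_univ, Fintype.card_fin, nsmul_eq_mul]
  set S1 : ℝ := ∑ i, μ i with hS1def
  set S2 : ℝ := ∑ i, μ i ^ 2 with hS2def
  set Y : ℝ := ∑ i, y i with hYdef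
  set Qy : ℝ := ∑ i, y i ^ 2 with hQydef
  have hYS : |Y + S1 - S2| ≤ (d : ℝ) * (10 * s ^ 3) := by
    have he : Y + S1 - S2 = ∑ i, (y i + μ i - μ i ^ 2) := by
      rw [hYdef, hS1def, hS2def, Finset.sum_sub_distrib, Finset.sum_add_distrib]
    rw [he]; exact sumb _ _ hycubic
  have hQyS : |Qy - S2| ≤ (d : ℝ) * (25 * s ^ 3) := by
    have he : Qy - S2 = ∑ i, (y i ^ 2 - μ i ^ 2) := by
      rw [hQydef, hS2def, Finset.sum_sub_distrib]
    rw [he]; exact sumb _ _ hysq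
  have hYpS : |Y + S1| ≤ (d : ℝ) * (5 * s ^ 2) := by
    have he : Y + S1 = ∑ i, (y i + μ i) := by
      rw [hYdef, hS1def, Finset.sum_add_distrib]
    rw [he]; exact sumb _ _ hyplus
  have hYb : |Y| ≤ (d : ℝ) * (3 * s) := sumb _ _ hyb
  have hS1b : |S1| ≤ (d : ℝ) * (2 * s) := sumb _ _ hμ
  have hY2 : |Y ^ 2 - S1 ^ 2| ≤ (d : ℝ) * (5 * s ^ 2) * ((d : ℝ) * (5 * s)) := by
    have hid : Y ^ 2 - S1 ^ 2 = (Y + S1) * (Y - S1) := by ring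
    have h1 : |Y - S1| ≤ (d : ℝ) * (5 * s) := by
      have h2 := abs_sub Y S1
      have e1 : (d:ℝ) * (3 * s) + (d:ℝ) * (2 * s) = (d:ℝ) * (5 * s) := by ring
      linarith
    rw [hid, abs_mul]
    exact mul_le_mul hYpS h1 (abs_nonneg _) (by positivity)
  rw [hM, hdetinv]
  set X : ℝ := ∏ i, (1 + y i) with hXdef
  set A' : ℝ := 1 + Y + (Y ^ 2 - Qy) / 2 with hA'def
  set F : ℝ := 1 - a * G.trace + δ * H.trace + δ * G.trace ^ 2 + δ * (G * G).trace with hFdef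
  set B : ℝ := 1 - S1 + (S1 ^ 2 + S2) / 2 with hBdef
  have hXA : |X - A'| ≤ (d : ℝ) ^ 3 * (3 * s) ^ 3 := happrox
  have hAB : |A' - B| ≤ (d : ℝ) * (10 * s ^ 3) +
      ((d : ℝ) * (5 * s ^ 2) * ((d : ℝ) * (5 * s))) / 2 + ((d : ℝ) * (25 * s ^ 3)) / 2 := by
    have hid : A' - B = (Y + S1 - S2) + (Y ^ 2 - S1 ^ 2) / 2 - (Qy - S2) / 2 := by
      rw [hA'def, hBdef]; ring
    rw [hid, abs_le]
    rw [abs_le] at hYS hY2 hQyS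
    constructor <;> linarith
  -- algebraic mismatch
  have hS1v : S1 = a * G.trace - δ * H.trace := by
    rw [hS1def, ← herm_trace hE, hS1E]
  have hS2v : S2 = (a * a) * (G * G).trace -
      (a * δ) * ((G * H).trace + (H * G).trace) + (δ * δ) * (H * H).trace := by
    have h0 : S2 = (E * E).trace := by rw [hS2def, herm_trace_sq hE]
    rw [h0, hS2E]
  have hBF : B - F = -(a * δ) * (G.trace * H.trace) + δ ^ 2 * H.trace ^ 2 / 2
      - (a * δ / 2) * ((G * H).trace + (H * G).trace) + (δ ^ 2 / 2) * (H * H).trace := by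
    rw [hBdef, hFdef, hS1v, hS2v]
    linear_combination (G.trace ^ 2 / 2 + (G * G).trace / 2) * haa
  -- bound the four mismatch terms
  have hadb : a * δ ≤ 3 / 2 * t * t ^ 2 := by
    rw [← ht2]
    exact mul_le_mul_of_nonneg_right hat (sq_nonneg t)
  have had0 : 0 ≤ a * δ := mul_nonneg ha0 hδ0.le
  have u1 : |a * δ * (G.trace * H.trace)| ≤ 3 / 2 * ((d : ℝ) ^ 2 * s ^ 3) := by
    rw [abs_mul, abs_of_nonneg had0, abs_mul]
    calc a * δ * (|G.trace| * |H.trace|) ≤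
        (3 / 2 * t * t ^ 2) * (((d : ℝ) * r) * ((d : ℝ) * r ^ 2)) :=
          mul_le_mul hadb (mul_le_mul htrG htrH (abs_nonneg _) (by positivity))
            (mul_nonneg (abs_nonneg _) (abs_nonneg _)) (by positivity)
      _ = 3 / 2 * ((d : ℝ) ^ 2 * (t ^ 3 * r ^ 3)) := by ring
      _ = 3 / 2 * ((d : ℝ) ^ 2 * s ^ 3) := by rw [hs3]
  have u2 : |δ ^ 2 * H.trace ^ 2 / 2| ≤ (d : ℝ) ^ 2 * s ^ 3 / 32 := by
    rw [abs_div, abs_mul, abs_pow, abs_pow, abs_of_nonneg hδ0.le]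
    have h1 : |H.trace| ^ 2 ≤ ((d : ℝ) * r ^ 2) ^ 2 :=
      pow_le_pow_left₀ (abs_nonneg _) htrH 2
    have h2 : δ ^ 2 * |H.trace| ^ 2 ≤ (t ^ 2) ^ 2 * ((d : ℝ) * r ^ 2) ^ 2 := by
      rw [ht2]
      exact mul_le_mul_of_nonneg_left h1 (by positivity)
    have h3 : (t ^ 2) ^ 2 * ((d : ℝ) * r ^ 2) ^ 2 = (d : ℝ) ^ 2 * s ^ 3 * (t * r) := by
      rw [hs3]; ring
    have h4 : (d : ℝ) ^ 2 * s ^ 3 * (t * r) ≤ (d : ℝ) ^ 2 * s ^ 3 * (1 / 16) := by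
      refine mul_le_mul_of_nonneg_left ?_ (by positivity)
      rw [← hsdef]; exact hs16
    have habs2 : |(2:ℝ)| = 2 := by norm_num
    rw [habs2]
    linarith
  have u3 : |a * δ / 2 * ((G * H).trace + (H * G).trace)| ≤ 3 / 2 * ((d : ℝ) * s ^ 3) := by
    rw [abs_mul, abs_div, abs_of_nonneg had0]
    have habs2 : |(2:ℝ)| = 2 := by norm_num
    rw [habs2]
    calc a * δ / 2 * |(G * H).trace + (H * G).trace| ≤
        (3 / 2 * t * t ^ 2) / 2 * (2 * (d : ℝ) * r ^ 3) := by
          refine mul_le_mul (by linarith) htrGH (abs_nonneg _) (by positivity)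
      _ = 3 / 2 * ((d : ℝ) * (t ^ 3 * r ^ 3)) := by ring
      _ = 3 / 2 * ((d : ℝ) * s ^ 3) := by rw [hs3]
  have u4 : |δ ^ 2 / 2 * (H * H).trace| ≤ (d : ℝ) * s ^ 3 / 32 := by
    rw [abs_mul, abs_div, abs_pow, abs_of_nonneg hδ0.le]
    have habs2 : |(2:ℝ)| = 2 := by norm_num
    rw [habs2]
    have h2 : δ ^ 2 / 2 * |(H * H).trace| ≤ (t ^ 2) ^ 2 / 2 * ((d : ℝ) * r ^ 4) := by
      rw [ht2]
      exact mul_le_mul_of_nonneg_left htrHH (by positivity)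
    have h3 : (t ^ 2) ^ 2 / 2 * ((d : ℝ) * r ^ 4) = (d : ℝ) * s ^ 3 * (t * r) / 2 := by
      rw [hs3]; ring
    have h4 : (d : ℝ) * s ^ 3 * (t * r) / 2 ≤ (d : ℝ) * s ^ 3 * (1 / 16) / 2 := by
      have : (d : ℝ) * s ^ 3 * (t * r) ≤ (d : ℝ) * s ^ 3 * (1 / 16) := by
        refine mul_le_mul_of_nonneg_left ?_ (by positivity)
        rw [← hsdef]; exact hs16
      linarith
    linarith
  have hBFb : |B - F| ≤ 3 / 2 * ((d : ℝ) ^ 2 * s ^ 3) + (d : ℝ) ^ 2 * s ^ 3 / 32 +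
      3 / 2 * ((d : ℝ) * s ^ 3) + (d : ℝ) * s ^ 3 / 32 := by
    rw [hBF, abs_le]
    rw [abs_le] at u1 u2 u3 u4
    constructor <;> linarith
  -- assemble
  have hRHS : 90 * (δ * t) * (d : ℝ) ^ 3 * (L * r) = 90 * (d : ℝ) ^ 3 * s ^ 3 := by
    rw [← ht2, ← hr2, hs3]; ring
  rw [hRHS]
  have htri : |X - F| ≤ |X - A'| + |A' - B| + |B - F| := by
    have e : X - F = (X - A') + ((A' - B) + (B - F)) := by ring
    calc |X - F| = |(X - A') + ((A' - B) + (B - F))| := by rw [e]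
      _ ≤ |X - A'| + |(A' - B) + (B - F)| := abs_add_le _ _
      _ ≤ |X - A'| + (|A' - B| + |B - F|) := by linarith [abs_add_le (A' - B) (B - F)]
      _ = |X - A'| + |A' - B| + |B - F| := by ring
  have m1 : (d : ℝ) * s ^ 3 ≤ (d : ℝ) ^ 3 * s ^ 3 :=
    mul_le_mul_of_nonneg_right (cube_bound1 hD1) (by positivity)
  have m2 : (d : ℝ) ^ 2 * s ^ 3 ≤ (d : ℝ) ^ 3 * s ^ 3 :=
    mul_le_mul_of_nonneg_right (cube_bound2 hD1) (by positivity)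
  have hXA' : |X - A'| ≤ 27 * ((d : ℝ) ^ 3 * s ^ 3) := by
    have e1 : (d : ℝ) ^ 3 * (3 * s) ^ 3 = 27 * ((d : ℝ) ^ 3 * s ^ 3) := by ring
    linarith [hXA, e1.le]
  have m0 : 0 ≤ (d : ℝ) ^ 3 * s ^ 3 :=
    mul_nonneg (pow_nonneg hdnn 3) (pow_nonneg hs0 3)
  linarith [hXA', hAB, hBFb, htri, m1, m2, m0]
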